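/- For all integers a, b and every squarefree positive integer n, the Kloosterman sum S(a,b;n) is nonzero. -/

import Mathlib

/-- `e(t) = exp(2πit)`. -/
noncomputable def eC (t : ℂ) : ℂ := Complex.exp (2 * Real.pi * Complex.I * t)

/-- The Kloosterman sum `S(a,b;c) = Σ_{x mod c, (x,c)=1} e((ax + b x̄)/c)`. -/
noncomputable def kloos (a b : ℤ) (c : ℕ) : ℂ :=
  ∑ x ∈ Finset.range c,
    if Nat.gcd x c = 1 then
      eC (((a : ℂ) * (x : ℂ) + (b : ℂ) * (((x : ZMod c)⁻¹).val : ℂ)) / (c : ℂ))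
    else 0

noncomputable def klos (a b : ℤ) (c : ℕ) [NeZero c] : ℂ :=
  ∑ x : ZMod c, if IsUnit x then ZMod.stdAddChar ((a : ZMod c) * x + (b : ZMod c) * x⁻¹) else 0
lemma stdAddChar_int (c : ℕ) [NeZero c] (k : ℤ) :
    ZMod.stdAddChar ((k : ZMod c)) = eC ((k : ℂ) / c) := by
  rw [ZMod.stdAddChar_coe, eC]
  ring_nf

lemma kloos_eq_klos (a b : ℤ) (c : ℕ) [NeZero c] : kloos a b c = klos a b c := by
  rw [kloos, klos]
  refine Finset.sum_nbij' (fun i => (i : ZMod c)) (fun x => x.val) ?_ ?_ ?_ ?_ ?_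
  · intro i hi; exact Finset.mem_univ _
  · intro x hx; exact Finset.mem_range.mpr (ZMod.val_lt x)
  · intro i hi; exact (ZMod.val_cast_of_lt (Finset.mem_range.mp hi))
  · intro x hx; simp [ZMod.natCast_val, ZMod.cast_id]
  · intro i hi
    by_cases h : Nat.gcd i c = 1
    · rw [if_pos h, if_pos ((ZMod.isUnit_iff_coprime i c).mpr h)]
      have harg : (a : ZMod c) * (i : ZMod c) + (b : ZMod c) * ((i : ZMod c))⁻¹
          = ((a * i + b * (((i : ZMod c))⁻¹).val : ℤ) : ZMod c) := by
        push_cast [ZMod.natCast_val, ZMod.cast_id]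
        ring
      rw [harg, stdAddChar_int]
      push_cast
      ring_nf
    · rw [if_neg h, if_neg (fun hu => h ((ZMod.isUnit_iff_coprime i c).mp hu))]
lemma char_split (m n : ℕ) [NeZero m] [NeZero n] (u v k : ℤ)
    (huv : u * n + v * m = 1) :
    ZMod.stdAddChar ((k : ZMod (m * n))) =
      ZMod.stdAddChar (((u * k : ℤ) : ZMod m)) * ZMod.stdAddChar (((v * k : ℤ) : ZMod n)) := by
  rw [ZMod.stdAddChar_coe, ZMod.stdAddChar_coe, ZMod.stdAddChar_coe, ← Complex.exp_add]
  congr 1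
  have hm : (m : ℂ) ≠ 0 := Nat.cast_ne_zero.mpr (NeZero.ne m)
  have hn : (n : ℂ) ≠ 0 := Nat.cast_ne_zero.mpr (NeZero.ne n)
  have h : (u : ℂ) * n + (v : ℂ) * m = 1 := by
    have := congrArg (Int.cast : ℤ → ℂ) huv
    push_cast at this
    exact this
  push_cast
  field_simp
  linear_combination (-(k : ℂ)) * h

lemma klos_mul (a b u v : ℤ) (m n : ℕ) [NeZero m] [NeZero n] (h : Nat.Coprime m n)
    (huv : u * n + v * m = 1) :
    klos a b (m * n) = klos (a * u) (b * u) m * klos (a * v) (b * v) n := by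
  haveI : NeZero (m * n) := ⟨mul_ne_zero (NeZero.ne m) (NeZero.ne n)⟩
  let e := ZMod.chineseRemainder h
  rw [klos, klos, klos, Finset.sum_mul_sum, ← Fintype.sum_prod_type']
  refine Fintype.sum_equiv e.toEquiv _ _ (fun x => ?_)
  simp only [RingEquiv.toEquiv_eq_coe, EquivLike.coe_coe]
  by_cases hx : IsUnit x
  · have hy : IsUnit (e x).1 := (hx.map e.toRingHom).map (RingHom.fst _ _)
    have hz : IsUnit (e x).2 := (hx.map e.toRingHom).map (RingHom.snd _ _)
    rw [if_pos hx]
    have h1 : ∀ r : ZMod (m*n), e r = ((e r).1, (e r).2) := fun r => rfl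
    -- integer representatives
    set k : ℕ := x.val with hk
    set l : ℕ := (x⁻¹).val with hl
    have hxk : x = (k : ZMod (m*n)) := by simp [hk, ZMod.natCast_val, ZMod.cast_id]
    have hxl : x⁻¹ = (l : ZMod (m*n)) := by simp [hl, ZMod.natCast_val, ZMod.cast_id]
    have hkl : ((k * l : ℕ) : ZMod (m*n)) = 1 := by
      push_cast [← hxk, ← hxl]; exact ZMod.mul_inv_of_unit x hx
    -- components of e x
    have he1 : (e x).1 = (k : ZMod m) := by rw [hxk]; simp [e]
    have he2 : (e x).2 = (k : ZMod n) := by rw [hxk]; simp [e]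
    have hklm : ((k : ZMod m)) * ((l : ZMod m)) = 1 := by
      have := congrArg (ZMod.castHom (dvd_mul_right m n) (ZMod m)) hkl
      rw [map_natCast, map_one] at this
      push_cast at this
      exact this
    have hkln : ((k : ZMod n)) * ((l : ZMod n)) = 1 := by
      have := congrArg (ZMod.castHom (dvd_mul_left n m) (ZMod n)) hkl
      rw [map_natCast, map_one] at this
      push_cast at this
      exact this
    have hinv1 : ((k : ZMod m))⁻¹ = (l : ZMod m) :=
      ZMod.inv_eq_of_mul_eq_one m _ _ hklm
    have hinv2 : ((k : ZMod n))⁻¹ = (l : ZMod n) :=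
      ZMod.inv_eq_of_mul_eq_one n _ _ hkln
    rw [if_pos hy, if_pos hz, he1, he2, hinv1, hinv2]
    have harg : (a : ZMod (m*n)) * x + (b : ZMod (m*n)) * x⁻¹
        = (((a * k + b * l : ℤ)) : ZMod (m*n)) := by
      rw [hxl, hxk]; push_cast; ring
    have hargm : (((a*u : ℤ)) : ZMod m) * (k : ZMod m) + (((b*u : ℤ)) : ZMod m) * (l : ZMod m)
        = (((u * (a * k + b * l) : ℤ)) : ZMod m) := by push_cast; ring
    have hargn : (((a*v : ℤ)) : ZMod n) * (k : ZMod n) + (((b*v : ℤ)) : ZMod n) * (l : ZMod n)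
        = (((v * (a * k + b * l) : ℤ)) : ZMod n) := by push_cast; ring
    rw [harg, char_split m n u v _ huv]
    push_cast
    congr 1 <;> · congr 1; ring
  · rw [if_neg hx]
    have hne : ¬(IsUnit (e x).1 ∧ IsUnit (e x).2) := by
      rintro ⟨⟨uy, huy⟩, ⟨uz, huz⟩⟩
      apply hx
      have hu : IsUnit (e x) := by
        refine IsUnit.of_mul_eq_one (((uy⁻¹ : (ZMod m)ˣ) : ZMod m), ((uz⁻¹ : (ZMod n)ˣ) : ZMod n)) ?_
        have h1 : (e x) = ((e x).1, (e x).2) := rfl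
        rw [h1, Prod.mk_mul_mk, ← huy, ← huz]
        simp [Prod.ext_iff]
      simpa using hu.map e.symm.toRingHom
    rcases not_and_or.mp hne with h' | h'
    · rw [if_neg h', zero_mul]
    · rw [if_neg h', mul_zero]

open Polynomial in
lemma klos_prime_aux (p : ℕ) (hp : p.Prime) (T : Finset (ZMod p)) (hT : T.card = p - 1)
    (g : ZMod p → ℂ) (ζ : ℂ) (hζ : IsPrimitiveRoot ζ p)
    (f : ZMod p → ℕ) (hf : ∀ x, f x < p)
    (hg : ∀ x ∈ T, g x = ζ ^ (f x)) :
    (∑ x ∈ T, g x) ≠ 0 := by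
  haveI : Fact p.Prime := ⟨hp⟩
  intro hc
  rw [Finset.sum_congr rfl hg] at hc
  set P : ℚ[X] := ∑ x ∈ T, X ^ (f x) with hP
  have haev : Polynomial.aeval ζ P = 0 := by
    rw [hP, map_sum]
    simpa using hc
  have hdvd : Polynomial.cyclotomic p ℚ ∣ P := by
    rw [Polynomial.cyclotomic_eq_minpoly_rat hζ hp.pos]
    exact minpoly.dvd ℚ ζ haev
  obtain ⟨Q, hQ⟩ := hdvd
  have hPeval : P.eval 1 = ((p : ℚ) - 1) := by
    rw [hP, Polynomial.eval_finset_sum]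
    simp only [Polynomial.eval_pow, Polynomial.eval_X, one_pow, Finset.sum_const, nsmul_eq_mul,
      mul_one, hT]
    have : (1:ℕ) ≤ p := hp.one_lt.le
    push_cast [Nat.cast_sub this]
    ring
  have hPne : P ≠ 0 := by
    intro h0
    rw [h0, Polynomial.eval_zero] at hPeval
    have hp1 : (p : ℚ) = 1 := by linarith
    have hp1' : p = 1 := by exact_mod_cast hp1
    have := hp.one_lt
    omega
  have hQne : Q ≠ 0 := by rintro rfl; rw [mul_zero] at hQ; exact hPne hQ
  have hdegP : P.natDegree ≤ p - 1 := by
    refine Polynomial.natDegree_sum_le_of_forall_le _ _ (fun x  _ => ?_)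
    rw [Polynomial.natDegree_X_pow]
    have := hf x
    omega
  have hcyc_deg : (Polynomial.cyclotomic p ℚ).natDegree = p - 1 := by
    rw [Polynomial.natDegree_cyclotomic, Nat.totient_prime hp]
  have hdegQ : Q.natDegree = 0 := by
    have := Polynomial.natDegree_mul (Polynomial.cyclotomic_ne_zero p ℚ) hQne
    rw [← hQ, hcyc_deg] at this
    omega
  have hQC : Q = Polynomial.C (Q.coeff 0) := Polynomial.eq_C_of_natDegree_eq_zero hdegQ
  set c : ℚ := Q.coeff 0 with hcdef
  -- eval at 1
  have he : ((p : ℚ) - 1) = p * c := by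
    rw [← hPeval, hQ, Polynomial.eval_mul, Polynomial.eval_one_cyclotomic_prime, hQC]
    simp
  -- coeff 0
  have hc0 : P.coeff 0 = c := by
    rw [hQ, Polynomial.mul_coeff_zero, Polynomial.cyclotomic_coeff_zero ℚ hp.one_lt, one_mul,
      hQC, Polynomial.coeff_C]
    simp
  have hc0' : P.coeff 0 = ((T.filter (fun x => f x = 0)).card : ℚ) := by
    rw [hP, Polynomial.finset_sum_coeff]
    simp only [Polynomial.coeff_X_pow]
    simp [Finset.sum_boole, eq_comm]
  set m : ℕ := (T.filter (fun x => f x = 0)).card with hm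
  have hcm : c = (m : ℚ) := by rw [← hc0, hc0']
  have : (p : ℚ) * m = (p : ℚ) - 1 := by rw [← hcm]; linarith
  have hnat : p * m = p - 1 := by
    have h1 : ((p * m : ℕ) : ℚ) = ((p - 1 : ℕ) : ℚ) := by
      push_cast [Nat.cast_sub hp.one_lt.le]
      exact this
    exact_mod_cast h1
  have h2 := hp.two_le
  by_cases hm0 : m = 0
  · rw [hm0, Nat.mul_zero] at hnat
    omega
  · have h3 : p * 1 ≤ p * m := Nat.mul_le_mul_left p (Nat.one_le_iff_ne_zero.mpr hm0)
    rw [hnat, Nat.mul_one] at h3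
    omega

lemma stdAddChar_nat (c : ℕ) [NeZero c] (j : ℕ) :
    ZMod.stdAddChar ((j : ZMod c)) = Complex.exp (2 * Real.pi * Complex.I / c) ^ j := by
  have h1 : ((j : ZMod c)) = (((j : ℤ)) : ZMod c) := by push_cast; rfl
  rw [h1, ZMod.stdAddChar_coe, ← Complex.exp_nat_mul]
  congr 1
  push_cast
  ring

lemma stdAddChar_eq_pow (c : ℕ) [NeZero c] (e : ZMod c) :
    ZMod.stdAddChar e = Complex.exp (2 * Real.pi * Complex.I / c) ^ e.val := by
  nth_rewrite 1 [show e = ((e.val : ZMod c)) by simp [ZMod.natCast_val, ZMod.cast_id]]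
  exact stdAddChar_nat c e.val

lemma klos_prime_ne_zero (A B : ℤ) (p : ℕ) (hp : p.Prime) :
    haveI : NeZero p := ⟨hp.pos.ne'⟩
    klos A B p ≠ 0 := by
  haveI : NeZero p := ⟨hp.pos.ne'⟩
  haveI : Fact p.Prime := ⟨hp⟩
  rw [klos, ← Finset.sum_filter]
  refine klos_prime_aux p hp _ ?_ _ _ (Complex.isPrimitiveRoot_exp p hp.pos.ne')
    (fun x => ((A : ZMod p) * x + (B : ZMod p) * x⁻¹).val) (fun x => ZMod.val_lt _) ?_
  · have : (Finset.univ.filter (fun x : ZMod p => IsUnit x)) = Finset.univ.erase 0 := by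
      rw [← Finset.filter_ne']
      apply Finset.filter_congr
      intro x _
      simp [isUnit_iff_ne_zero]
    rw [this, Finset.card_erase_of_mem (Finset.mem_univ _)]
    simp [ZMod.card]
  · intro x _
    exact stdAddChar_eq_pow p _

lemma kloos_one (a b : ℤ) : kloos a b 1 ≠ 0 := by
  rw [kloos]
  simp only [Finset.sum_range_one, Nat.gcd_zero_left, if_true, eC]
  exact Complex.exp_ne_zero _

lemma kloos_ne_zero : ∀ n : ℕ, 0 < n → Squarefree n → ∀ a b : ℤ, kloos a b n ≠ 0 := by
  intro n
  induction n using Nat.strong_induction_on with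
  | _ n IH =>
  intro hn hsq a b
  rcases eq_or_ne n 1 with rfl | hne1
  · exact kloos_one a b
  · set p := n.minFac with hpdef
    have hp : p.Prime := Nat.minFac_prime hne1
    have hdvd : p ∣ n := Nat.minFac_dvd n
    obtain ⟨m, hm⟩ := hdvd
    have hm0 : 0 < m := by
      rcases Nat.eq_zero_or_pos m with rfl | h
      · rw [hm, Nat.mul_zero] at hn; omega
      · exact h
    have hmlt : m < n := by
      rw [hm]
      calc m = 1 * m := (Nat.one_mul m).symm
        _ < p * m := (Nat.mul_lt_mul_right hm0).mpr hp.one_lt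
    have hsqm : Squarefree m := hsq.squarefree_of_dvd ⟨p, by rw [hm]; ring⟩
    have hcop : Nat.Coprime p m := by
      rw [hp.coprime_iff_not_dvd]
      intro hpm
      obtain ⟨k, hk⟩ := hpm
      have hsqd : p * p ∣ n := ⟨k, by rw [hm, hk]; ring⟩
      exact hp.one_lt.ne' (Nat.isUnit_iff.mp (hsq p hsqd))
    haveI : NeZero p := ⟨hp.pos.ne'⟩
    haveI : NeZero m := ⟨hm0.ne'⟩
    haveI : NeZero (p * m) := ⟨mul_ne_zero hp.pos.ne' hm0.ne'⟩
    obtain ⟨u, v, huv⟩ : ∃ u v : ℤ, u * (m : ℤ) + v * (p : ℤ) = 1 := by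
      obtain ⟨s, t, hst⟩ := Nat.isCoprime_iff_coprime.mpr hcop
      exact ⟨t, s, by linarith⟩
    rw [hm, kloos_eq_klos, klos_mul a b u v p m hcop huv]
    refine mul_ne_zero (klos_prime_ne_zero _ _ p hp) ?_
    rw [← kloos_eq_klos]
    exact IH m hmlt hm0 hsqm _ _

theorem stmt8 (a b : ℤ) (n : ℕ) (hn : 0 < n) (hsq : Squarefree n) :
    kloos a b n ≠ 0 :=
  kloos_ne_zero n hn hsq a b
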